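/- Let K = Z_p with the action of Γ ≅ Z_p given through a continuous character κ : Γ → 1 + pZ_p, and let X be a Λ = Z_p[[T]]-module embedded in Λ^r with finite cokernel H of exponent p^e, where T acts via a fixed topological generator γ₀ (so Tm = (γ₀−1)m). For i ∈ Z define X(i) = X ⊗_{Z_p} Z_p(i) with Γ acting diagonally via κ^i on Z_p(i), and set Y_i = (X(i) ∩ TΛ(i)^r) + p^n X(i) ⊆ X(i). If i ≡ j (mod p^m) where m = max(0, e + n − n_F) satisfies κ(γ)^{p^m} ≡ 1 (mod p^{e+n}) for all γ ∈ Γ, then Y_j ⊗ Z_p(i−j) = Y_i as subgroups of X(i) under the canonical identification X(j)(i−j) = X(i). -/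

import Mathlib

lemma unit_zpow_sub_one_dvd {R : Type*} [CommRing R] (a : Rˣ) (q : R)
    (h : q ∣ ((a : R) - 1)) : ∀ k : ℤ, q ∣ (((a ^ k : Rˣ) : R) - 1) := by
  intro k
  obtain ⟨k, rfl | rfl⟩ := k.eq_nat_or_neg
  · rw [zpow_natCast, Units.val_pow_eq_pow_val]
    exact h.trans (by simpa using sub_dvd_pow_sub_pow (a : R) 1 k)
  · have h1 : q ∣ ((a : R) ^ k - 1) :=
      h.trans (by simpa using sub_dvd_pow_sub_pow (a : R) 1 k)
    have key : (((a ^ (-(k:ℤ)) : Rˣ) : R) - 1) =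
        ((a ^ (-(k:ℤ)) : Rˣ) : R) * (1 - (a:R)^k) := by
      rw [mul_sub, mul_one]
      congr 1
      rw [← Units.val_pow_eq_pow_val, ← Units.val_mul, ← zpow_natCast a k,
        ← zpow_add]
      simp
    rw [key]
    exact Dvd.dvd.mul_left (by simpa using h1.neg_right) _


/-- Twist-periodicity of the submodules `Y_i`: let `Λ = ℤ_p[[T]]`, let `X ⊆ Λ^r` be a
`Λ`-submodule whose cokernel has exponent `p^e`, and let `κ(γ₀) = u ∈ 1 + pℤ_p` with
`u^{p^m} ≡ 1 (mod p^{e+n})`.  In the `i`-th Tate twist, `T` acts on the ambient module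
as multiplication by `c_i = C(uⁱ)(1+T) − 1`, and
`Y_i = (X ∩ c_i Λ^r) + pⁿ X`.  If `i ≡ j (mod p^m)` then `Y_i = Y_j` (under the
canonical identification of the underlying modules of the twists). -/
theorem stmt16 (p : ℕ) [Fact p.Prime] (r n e m : ℕ)
    (X : Submodule (PowerSeries ℤ_[p]) (Fin r → PowerSeries ℤ_[p]))
    (he : ∀ v : Fin r → PowerSeries ℤ_[p], ((p : PowerSeries ℤ_[p]) ^ e) • v ∈ X)
    (u : ℤ_[p]ˣ) (hu : (p : ℤ_[p]) ∣ ((u : ℤ_[p]) - 1))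
    (hm : (p : ℤ_[p]) ^ (e + n) ∣ ((u : ℤ_[p]) ^ (p ^ m) - 1)) :
    ∀ c : ℤ → PowerSeries ℤ_[p],
      (∀ i : ℤ, c i = PowerSeries.C ((u ^ i : ℤ_[p]ˣ) : ℤ_[p]) *
        (1 + PowerSeries.X) - 1) →
    ∀ Y : ℤ → Submodule (PowerSeries ℤ_[p]) (Fin r → PowerSeries ℤ_[p]),
      (∀ i : ℤ, Y i =
        (X ⊓ LinearMap.range
            (LinearMap.lsmul (PowerSeries ℤ_[p]) (Fin r → PowerSeries ℤ_[p]) (c i))) ⊔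
          Submodule.map
            (LinearMap.lsmul (PowerSeries ℤ_[p]) (Fin r → PowerSeries ℤ_[p])
              ((p : PowerSeries ℤ_[p]) ^ n)) X) →
    ∀ i j : ℤ, (p : ℤ) ^ m ∣ (j - i) → Y i = Y j := by
  intro c hc Y hY i j hij
  -- divisibility for integer exponents divisible by p^m
  have pow_dvd : ∀ k : ℤ, (p : ℤ) ^ m ∣ k →
      (p : ℤ_[p]) ^ (e + n) ∣ (((u ^ k : ℤ_[p]ˣ) : ℤ_[p]) - 1) := by
    intro k ⟨t, ht⟩
    have hk : k = ((p ^ m : ℕ) : ℤ) * t := by push_cast; exact ht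
    rw [hk, zpow_mul, zpow_natCast]
    exact unit_zpow_sub_one_dvd (u ^ (p ^ m)) _
      (by rwa [Units.val_pow_eq_pow_val]) t
  -- the key one-sided inclusion
  have key : ∀ a b : ℤ,
      (p : ℤ_[p]) ^ (e + n) ∣ (((u ^ (b - a) : ℤ_[p]ˣ) : ℤ_[p]) - 1) →
      Y a ≤ Y b := by
    intro a b hab
    rw [hY a, hY b]
    apply sup_le ?_ le_sup_right
    intro x hx
    obtain ⟨hx1, v, hv⟩ := hx
    simp only [LinearMap.lsmul_apply] at hv
    -- dd = u^b - u^a is divisible by p^(e+n)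
    set ua : ℤ_[p] := ((u ^ a : ℤ_[p]ˣ) : ℤ_[p])
    set ub : ℤ_[p] := ((u ^ b : ℤ_[p]ˣ) : ℤ_[p])
    have hdd : (p : ℤ_[p]) ^ (e + n) ∣ (ub - ua) := by
      have h1 : ub = ua * ((u ^ (b - a) : ℤ_[p]ˣ) : ℤ_[p]) := by
        rw [← Units.val_mul, ← zpow_add]
        ring_nf
        rfl
      have : ub - ua = ua * (((u ^ (b - a) : ℤ_[p]ˣ) : ℤ_[p]) - 1) := by
        rw [h1]; ring
      rw [this]
      exact hab.mul_left _
    obtain ⟨d, hd⟩ := hdd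
    -- the correction term
    set w : Fin r → PowerSeries ℤ_[p] :=
      (PowerSeries.C d * (1 + PowerSeries.X)) •
        (((p : PowerSeries ℤ_[p]) ^ e) • v) with hw_def
    have hwX : w ∈ X := X.smul_mem _ (he v)
    have hscalar : (PowerSeries.C (ub - ua) * (1 + PowerSeries.X)) • v =
        ((p : PowerSeries ℤ_[p]) ^ n) • w := by
      rw [hw_def, ← mul_smul, ← mul_smul]
      congr 1
      rw [hd, map_mul, map_pow, map_natCast]
      ring
    have hcb : c b • v = x + ((p : PowerSeries ℤ_[p]) ^ n) • w := by
      have h2 : c b = c a + PowerSeries.C (ub - ua) * (1 + PowerSeries.X) := by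
        rw [hc a, hc b, map_sub]; ring
      rw [h2, add_smul, hv, hscalar]
    -- assemble membership
    rw [Submodule.mem_sup]
    refine ⟨c b • v, ⟨?_, ⟨v, rfl⟩⟩, -(((p : PowerSeries ℤ_[p]) ^ n) • w), ?_, ?_⟩
    · rw [hcb]
      exact X.add_mem hx1 (X.smul_mem _ hwX)
    · exact Submodule.neg_mem _ ⟨w, hwX, rfl⟩
    · rw [hcb]; abel
  exact le_antisymm
    (key i j (pow_dvd _ hij))
    (key j i (pow_dvd _ (by simpa using hij.neg_right)))
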